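/- Let G = (V,E) be an M weight-bounded linear weighted graph and let tsm weakly satisfy G with no gtFr-geqFr* cycle. Define ts_1(v) as the maximum number of gtFr edges used by any path in (V, geqFr) starting from v, and ts_0 inductively by ts_0(1) = 0, ts_0(i+1) = ts_0(i) + dtsm(i,i+1). Then ts(v) = ts_0(v) + ts_1(v)/(|V|+1) is a monotone realization of G satisfying all mixed constraints, in particular ts(v) - ts(u) < α for every strict edge (u,<,α,v). -/

import Mathlib

open Finset

/-- A weighted constraint edge: `ts tgt - ts src ◁ wt` where ◁ is `<` if `strict` else `≤`. -/
structure WEdge where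
  src : ℕ
  strict : Bool
  wt : ℤ
  tgt : ℕ
deriving DecidableEq

/-- `ts` satisfies the constraint of edge `e`. -/
def satEdge (ts : ℕ → ℝ) (e : WEdge) : Prop :=
  if e.strict then ts e.tgt - ts e.src < (e.wt : ℝ) else ts e.tgt - ts e.src ≤ (e.wt : ℝ)

/-- `ts` realizes the linear weighted graph on vertices `{1,…,n}` with edge set `E`:
monotone w.r.t. the linear order and all difference constraints hold. -/
def Realizes (n : ℕ) (E : Finset WEdge) (ts : ℕ → ℝ) : Prop :=
  (∀ u v : ℕ, 1 ≤ u → u ≤ v → v ≤ n → ts u ≤ ts v) ∧ ∀ e ∈ E, satEdge ts e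

/-- Integer parts of consecutive time-stamps differ by at least 0 and at most `M - 1`. -/
def SlowlyMonotone (M : ℤ) (n : ℕ) (ts : ℕ → ℝ) : Prop :=
  ∀ i : ℕ, 1 ≤ i → i < n → 0 ≤ ⌊ts (i + 1)⌋ - ⌊ts i⌋ ∧ ⌊ts (i + 1)⌋ - ⌊ts i⌋ ≤ M - 1

/-- All edges of the graph have endpoints in `{1,…,n}`. -/
def InGraph (n : ℕ) (E : Finset WEdge) : Prop :=
  ∀ e ∈ E, 1 ≤ e.src ∧ e.src ≤ n ∧ 1 ≤ e.tgt ∧ e.tgt ≤ n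

/-- `M` weight-bounded: all weights have absolute value at most `M - 1`. -/
def WtBounded (M : ℤ) (E : Finset WEdge) : Prop := ∀ e ∈ E, |e.wt| ≤ M - 1

/-- `dtsm(u,v) = (tsm v - tsm u) mod M`. -/
def dtsm (M : ℤ) (tsm : ℕ → ℤ) (u v : ℕ) : ℤ := (tsm v - tsm u) % M

/-- `dtsm⁺(u,v)`, for `u ≤ v`: the cumulative sum of consecutive `dtsm`'s, capped at `M`. -/
def dtsmP (M : ℤ) (tsm : ℕ → ℤ) (u v : ℕ) : ℤ :=
  min M (∑ i ∈ Finset.Ico u v, dtsm M tsm i (i + 1))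

/-- Antisymmetric extension of `dtsm⁺` to arbitrary pairs. -/
def dtsmE (M : ℤ) (tsm : ℕ → ℤ) (u v : ℕ) : ℤ :=
  if u ≤ v then dtsmP M tsm u v else - dtsmP M tsm v u

/-- `(u,v)` is `tsm`-big. -/
def TsmBig (M : ℤ) (tsm : ℕ → ℤ) (u v : ℕ) : Prop :=
  ∃ w1 w2 : ℕ, u ≤ w1 ∧ w1 < w2 ∧ w2 ≤ v ∧ M ≤ dtsm M tsm u w1 + dtsm M tsm w1 w2

/-- `tsm` is a time-stamping modulo `M` on vertices `{1,…,n}`. -/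
def TSM (M : ℤ) (n : ℕ) (tsm : ℕ → ℤ) : Prop :=
  ∀ v, 1 ≤ v → v ≤ n → 0 ≤ tsm v ∧ tsm v < M

/-- `tsm` weakly satisfies the graph (forward/backward conditions). -/
def WeaklySat (M : ℤ) (E : Finset WEdge) (tsm : ℕ → ℤ) : Prop :=
  ∀ e ∈ E,
    (e.src ≤ e.tgt → ¬ TsmBig M tsm e.src e.tgt ∧ dtsm M tsm e.src e.tgt ≤ e.wt) ∧
    (e.tgt < e.src → TsmBig M tsm e.tgt e.src ∨ - e.wt ≤ dtsm M tsm e.tgt e.src)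

/-- `(u,v) ∈ geqFr`: fractional part of `ts u` must be ≥ that of `ts v`. -/
def geqFr (M : ℤ) (tsm : ℕ → ℤ) (E : Finset WEdge) (u v : ℕ) : Prop :=
  (∃ e ∈ E, e.src = u ∧ e.tgt = v ∧ dtsmE M tsm u v = e.wt) ∨
  (v + 1 = u ∧ dtsmE M tsm u v = 0)

/-- `(u,v) ∈ gtFr`: fractional part of `ts u` must be > that of `ts v`. -/
def gtFr (M : ℤ) (tsm : ℕ → ℤ) (E : Finset WEdge) (u v : ℕ) : Prop :=
  ∃ e ∈ E, e.strict = true ∧ e.src = u ∧ e.tgt = v ∧ dtsmE M tsm u v = e.wt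

open Classical in
/-- Number of `gtFr` edges used by the path `p 0, p 1, …, p k`. -/
noncomputable def gtCount (M : ℤ) (tsm : ℕ → ℤ) (E : Finset WEdge) (k : ℕ) (p : ℕ → ℕ) : ℕ :=
  ((Finset.range k).filter (fun i => gtFr M tsm E (p i) (p (i + 1)))).card

lemma aux_dtsm_nonneg {M : ℤ} (hM : 1 ≤ M) (tsm : ℕ → ℤ) (i j : ℕ) : 0 ≤ dtsm M tsm i j :=
  Int.emod_nonneg _ (by omega)

lemma aux_chain_rtg {α : Type*} {r : α → α → Prop} {k : ℕ} {p : ℕ → α}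
    (hp : ∀ i < k, r (p i) (p (i+1))) {a b : ℕ} (hab : a ≤ b) (hb : b ≤ k) :
    Relation.ReflTransGen r (p a) (p b) := by
  induction b with
  | zero => obtain rfl := Nat.le_zero.mp hab; exact .refl
  | succ b ih =>
    rcases Nat.eq_or_lt_of_le hab with rfl | h
    · exact .refl
    · exact (ih (by omega) (by omega)).tail (hp b (by omega))

open Classical in
lemma aux_gtCount_le_n (M : ℤ) (tsm : ℕ → ℤ) {n : ℕ} {E : Finset WEdge} (hG : InGraph n E)
    (hnc : ¬ ∃ u v : ℕ, gtFr M tsm E u v ∧ Relation.ReflTransGen (geqFr M tsm E) v u)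
    (k : ℕ) (p : ℕ → ℕ) (hpe : ∀ i < k, geqFr M tsm E (p i) (p (i + 1))) :
    gtCount M tsm E k p ≤ n := by
  have h := Finset.card_le_card_of_injOn (f := p)
    (s := (Finset.range k).filter (fun i => gtFr M tsm E (p i) (p (i + 1))))
    (t := Finset.Icc 1 n) ?_ ?_
  · simpa [gtCount] using h
  · intro i hi
    simp only [Finset.mem_coe, Finset.mem_filter, Finset.mem_range] at hi
    obtain ⟨e, he, hst, hs, ht, hw⟩ := hi.2
    have hb := hG e he
    simp only [Finset.coe_Icc, Set.mem_Icc, Finset.mem_Icc]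
    omega
  · intro i hi j hj hij
    simp only [Finset.coe_filter, Set.mem_setOf_eq, Finset.mem_range] at hi hj
    by_contra hne
    apply hnc
    rcases Nat.lt_or_ge i j with h | h
    · refine ⟨p i, p (i+1), hi.2, ?_⟩
      have := aux_chain_rtg hpe (show i+1 ≤ j by omega) (le_of_lt hj.1)
      rwa [← hij] at this
    · have h' : j < i := by omega
      refine ⟨p j, p (j+1), hj.2, ?_⟩
      have := aux_chain_rtg hpe (show j+1 ≤ i by omega) (le_of_lt hi.1)
      rwa [hij] at this

open Classical in
lemma aux_ts1_ext (M : ℤ) (tsm : ℕ → ℤ) (E : Finset WEdge) (ts1 : ℕ → ℕ) {u v : ℕ}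
    (hu : ∀ (k : ℕ) (p : ℕ → ℕ), p 0 = u → (∀ i < k, geqFr M tsm E (p i) (p (i + 1))) →
        gtCount M tsm E k p ≤ ts1 u)
    (hv : ∃ (k : ℕ) (p : ℕ → ℕ), p 0 = v ∧ (∀ i < k, geqFr M tsm E (p i) (p (i + 1))) ∧
        gtCount M tsm E k p = ts1 v)
    (h : geqFr M tsm E u v) :
    ts1 v + (if gtFr M tsm E u v then 1 else 0) ≤ ts1 u := by
  obtain ⟨k, p, hp0, hpe, hcnt⟩ := hv
  set q : ℕ → ℕ := fun i => if i = 0 then u else p (i - 1) with hq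
  have hq0 : q 0 = u := rfl
  have hqs : ∀ i, q (i+1) = p i := fun i => by simp [hq]
  have hedges : ∀ i < k+1, geqFr M tsm E (q i) (q (i+1)) := by
    intro i hi
    cases i with
    | zero => rw [hq0, hqs, hp0]; exact h
    | succ j => rw [hqs, hqs]; exact hpe j (by omega)
  have hle := hu (k+1) q hq0 hedges
  unfold gtCount at hle hcnt
  set s1 := (Finset.range k).filter (fun i => gtFr M tsm E (p i) (p (i+1))) with hs1
  set s2 := (Finset.range (k+1)).filter (fun i => gtFr M tsm E (q i) (q (i+1))) with hs2
  have hsub : s1.image (· + 1) ⊆ s2 := by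
    intro j hj
    simp only [hs1, hs2, Finset.mem_image, Finset.mem_filter, Finset.mem_range] at hj ⊢
    obtain ⟨i, ⟨hik, hg⟩, rfl⟩ := hj
    exact ⟨by omega, by rw [hqs, hqs]; exact hg⟩
  have hcard1 : (s1.image (· + 1)).card = s1.card :=
    Finset.card_image_of_injective _ (fun a b hab => by omega)
  by_cases hgt : gtFr M tsm E u v
  · have h0 : 0 ∈ s2 := by
      simp only [hs2, Finset.mem_filter, Finset.mem_range]
      refine ⟨by omega, ?_⟩
      rw [hq0, hqs, hp0]
      exact hgt
    have hins : insert 0 (s1.image (· + 1)) ⊆ s2 :=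
      Finset.insert_subset h0 hsub
    have hni : 0 ∉ s1.image (· + 1) := by simp
    have hc := Finset.card_le_card hins
    rw [Finset.card_insert_of_notMem hni, hcard1] at hc
    rw [if_pos hgt]
    omega
  · have hc := Finset.card_le_card hsub
    rw [hcard1] at hc
    rw [if_neg hgt]
    omega
theorem mixed_construction_realizes (M : ℤ) (hM : 1 ≤ M) (n : ℕ) (E : Finset WEdge)
    (hG : InGraph n E) (hW : WtBounded M E) (tsm : ℕ → ℤ) (hT : TSM M n tsm)
    (hWS : ∀ e ∈ E, dtsmE M tsm e.src e.tgt ≤ e.wt)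
    (hnc : ¬ ∃ u v : ℕ, gtFr M tsm E u v ∧ Relation.ReflTransGen (geqFr M tsm E) v u)
    (ts1 : ℕ → ℕ)
    (hts1 : ∀ v : ℕ,
      (∀ (k : ℕ) (p : ℕ → ℕ), p 0 = v → (∀ i < k, geqFr M tsm E (p i) (p (i + 1))) →
        gtCount M tsm E k p ≤ ts1 v) ∧
      (∃ (k : ℕ) (p : ℕ → ℕ), p 0 = v ∧ (∀ i < k, geqFr M tsm E (p i) (p (i + 1))) ∧
        gtCount M tsm E k p = ts1 v)) :
    Realizes n E (fun v =>
      ((∑ i ∈ Finset.Ico 1 v, dtsm M tsm i (i + 1) : ℤ) : ℝ) + (ts1 v : ℝ) / (n + 1)) := by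
  have hts1n : ∀ v, ts1 v ≤ n := by
    intro v
    obtain ⟨k, p, hp0, hpe, hcnt⟩ := (hts1 v).2
    rw [← hcnt]
    exact aux_gtCount_le_n M tsm hG hnc k p hpe
  have hnp : (0:ℝ) < (n:ℝ) + 1 := by positivity
  have hfrac_lt : ∀ v : ℕ, (ts1 v : ℝ) / ((n:ℝ) + 1) < 1 := by
    intro v
    rw [div_lt_one hnp]
    have h1 : (ts1 v : ℝ) ≤ (n : ℝ) := by exact_mod_cast hts1n v
    linarith
  have hfrac_nonneg : ∀ v : ℕ, (0:ℝ) ≤ (ts1 v : ℝ) / ((n:ℝ) + 1) := fun v => by positivity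
  have hfrac_mono : ∀ u v : ℕ, ts1 u ≤ ts1 v →
      (ts1 u : ℝ) / ((n:ℝ) + 1) ≤ (ts1 v : ℝ) / ((n:ℝ) + 1) := by
    intro u v h
    have h' : (ts1 u : ℝ) ≤ (ts1 v : ℝ) := by exact_mod_cast h
    gcongr
  have hfrac_strict : ∀ u v : ℕ, ts1 u < ts1 v →
      (ts1 u : ℝ) / ((n:ℝ) + 1) < (ts1 v : ℝ) / ((n:ℝ) + 1) := by
    intro u v h
    exact (div_lt_div_iff_of_pos_right hnp).mpr (by exact_mod_cast h)
  constructor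
  · -- monotonicity
    have hstep : ∀ i : ℕ, 1 ≤ i → i < n →
        ((∑ j ∈ Finset.Ico 1 i, dtsm M tsm j (j + 1) : ℤ) : ℝ) + (ts1 i : ℝ) / (n + 1) ≤
        ((∑ j ∈ Finset.Ico 1 (i+1), dtsm M tsm j (j + 1) : ℤ) : ℝ) + (ts1 (i+1) : ℝ) / (n + 1) := by
      intro i h1 h2
      have hd := aux_dtsm_nonneg hM tsm i (i+1)
      have hsum : ∑ j ∈ Finset.Ico 1 (i+1), dtsm M tsm j (j+1)
          = (∑ j ∈ Finset.Ico 1 i, dtsm M tsm j (j+1)) + dtsm M tsm i (i+1) :=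
        Finset.sum_Ico_succ_top h1 _
      rcases eq_or_lt_of_le hd with h0 | h0
      · have hgeq : geqFr M tsm E (i+1) i := by
          right
          refine ⟨rfl, ?_⟩
          have hnle : ¬ (i + 1 ≤ i) := by omega
          rw [dtsmE, if_neg hnle, dtsmP]
          rw [Nat.Ico_succ_singleton]
          rw [Finset.sum_singleton, ← h0]
          omega
        have hmono := aux_ts1_ext M tsm E ts1 (hts1 (i+1)).1 (hts1 i).2 hgeq
        have hm : ts1 i ≤ ts1 (i+1) := by split_ifs at hmono <;> omega
        have := hfrac_mono i (i+1) hm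
        rw [hsum, ← h0]
        push_cast
        linarith
      · have h1le : (1:ℝ) ≤ ((dtsm M tsm i (i+1) : ℤ) : ℝ) := by exact_mod_cast h0
        have := hfrac_lt i
        have := hfrac_nonneg (i+1)
        rw [hsum]
        push_cast at h1le ⊢
        linarith
    intro u v h1 huv hvn
    induction v, huv using Nat.le_induction with
    | base => exact le_refl _
    | succ v hv ih =>
      exact le_trans (ih (by omega)) (hstep v (by omega) (by omega))
  · -- edge constraints
    intro e he
    obtain ⟨hs1, hs2, ht1, ht2⟩ := hG e he
    have hw := abs_le.mp (hW e he)
    have hws := hWS e he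
    -- Δ := T0 tgt - T0 src
    have key : (∑ i ∈ Finset.Ico 1 e.tgt, dtsm M tsm i (i + 1)) -
        (∑ i ∈ Finset.Ico 1 e.src, dtsm M tsm i (i + 1)) ≤ e.wt ∧
        ((∑ i ∈ Finset.Ico 1 e.tgt, dtsm M tsm i (i + 1)) -
        (∑ i ∈ Finset.Ico 1 e.src, dtsm M tsm i (i + 1)) = e.wt →
          dtsmE M tsm e.src e.tgt = e.wt) := by
      by_cases huv : e.src ≤ e.tgt
      · have hsum : (∑ i ∈ Finset.Ico 1 e.src, dtsm M tsm i (i+1)) +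
            (∑ i ∈ Finset.Ico e.src e.tgt, dtsm M tsm i (i+1)) =
            ∑ i ∈ Finset.Ico 1 e.tgt, dtsm M tsm i (i+1) :=
          Finset.sum_Ico_consecutive _ hs1 huv
        have hE : dtsmE M tsm e.src e.tgt =
            min M (∑ i ∈ Finset.Ico e.src e.tgt, dtsm M tsm i (i+1)) := by
          rw [dtsmE, if_pos huv, dtsmP]
        rw [hE] at hws ⊢
        omega
      · have hvu : e.tgt ≤ e.src := by omega
        have hsum : (∑ i ∈ Finset.Ico 1 e.tgt, dtsm M tsm i (i+1)) +
            (∑ i ∈ Finset.Ico e.tgt e.src, dtsm M tsm i (i+1)) =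
            ∑ i ∈ Finset.Ico 1 e.src, dtsm M tsm i (i+1) :=
          Finset.sum_Ico_consecutive _ ht1 hvu
        have hSnn : 0 ≤ ∑ i ∈ Finset.Ico e.tgt e.src, dtsm M tsm i (i+1) :=
          Finset.sum_nonneg fun i _ => aux_dtsm_nonneg hM tsm i (i+1)
        have hE : dtsmE M tsm e.src e.tgt =
            - min M (∑ i ∈ Finset.Ico e.tgt e.src, dtsm M tsm i (i+1)) := by
          rw [dtsmE, if_neg huv, dtsmP]
        rw [hE] at hws ⊢
        omega
    obtain ⟨hΔle, hΔeq⟩ := key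
    rcases lt_or_eq_of_le hΔle with hlt | heq
    · -- strict integer gap
      have hR : ((∑ i ∈ Finset.Ico 1 e.tgt, dtsm M tsm i (i + 1) : ℤ) : ℝ) -
          ((∑ i ∈ Finset.Ico 1 e.src, dtsm M tsm i (i + 1) : ℤ) : ℝ) ≤ (e.wt : ℝ) - 1 := by
        have : (∑ i ∈ Finset.Ico 1 e.tgt, dtsm M tsm i (i + 1)) -
            (∑ i ∈ Finset.Ico 1 e.src, dtsm M tsm i (i + 1)) ≤ e.wt - 1 := by omega
        exact_mod_cast this
      have h1 := hfrac_lt e.tgt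
      have h2 := hfrac_nonneg e.src
      simp only [satEdge]
      split_ifs <;> linarith
    · have hdE := hΔeq heq
      have hgeq : geqFr M tsm E e.src e.tgt := Or.inl ⟨e, he, rfl, rfl, hdE⟩
      have hmono := aux_ts1_ext M tsm E ts1 (hts1 e.src).1 (hts1 e.tgt).2 hgeq
      have hReq : ((∑ i ∈ Finset.Ico 1 e.tgt, dtsm M tsm i (i + 1) : ℤ) : ℝ) -
          ((∑ i ∈ Finset.Ico 1 e.src, dtsm M tsm i (i + 1) : ℤ) : ℝ) = (e.wt : ℝ) := by
        exact_mod_cast congrArg (fun z : ℤ => (z : ℝ)) heq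
      simp only [satEdge]
      split_ifs with hstr
      ·
        have hgt : gtFr M tsm E e.src e.tgt := ⟨e, he, hstr, rfl, rfl, hdE⟩
        rw [if_pos hgt] at hmono
        have := hfrac_strict e.tgt e.src (by omega)
        linarith
      · have hm : ts1 e.tgt ≤ ts1 e.src := by split_ifs at hmono <;> omega
        have := hfrac_mono e.tgt e.src hm
        linarith
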